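/- arXiv:2601.08362 — 2 statements merged into one kernel-verified Lean document; each statement's English description precedes it below -/
import Mathlib

section
/- Let z̄ = (x̄,ȳ) ∈ ℝ^m × S^n and let p be the positive inertia index of G(z̄). If the W-SOC holds at z̄, then there exists an open neighborhood U of z̄ in ℝ^m × S^n such that the W-SOC holds at every z ∈ U for which the positive inertia index of G(z) equals p. -/
open scoped Classical RealInnerProductSpace
open Matrix Set

noncomputable section

abbrev Mat (n : ℕ) : Type := Matrix (Fin n) (Fin n) ℝ

abbrev Em (m : ℕ) : Type := EuclideanSpace ℝ (Fin m)

attribute [instance] Matrix.frobeniusNormedAddCommGroup Matrix.frobeniusNormedSpace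

/-- The trace (Frobenius) inner product `⟨A,B⟩ = tr(AᵀB)` on matrices; for symmetric
matrices this is `tr(AB)`. -/
def minner {n : ℕ} (A B : Mat n) : ℝ := (Aᵀ * B).trace

/-- `P` is an orthogonal matrix. -/
def IsOrthoMat {n : ℕ} (P : Mat n) : Prop := P * Pᵀ = 1 ∧ Pᵀ * P = 1

/-- `(P, lam)` is an eigenvalue decomposition of `A` with orthogonal `P` and
nonincreasing eigenvalue vector `lam`: `A = P·Diag(lam)·Pᵀ`. -/
def IsEigDecomp {n : ℕ} (A P : Mat n) (lam : Fin n → ℝ) : Prop :=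
  IsOrthoMat P ∧ Antitone lam ∧ A = P * Matrix.diagonal lam * Pᵀ

/-- The stratum `M_{p,q}` of symmetric matrices with exactly `p` positive and `q` negative
eigenvalues. -/
def stratum (n p q : ℕ) : Set (Mat n) :=
  {A | ∃ P lam, IsEigDecomp A P lam ∧
    {i : Fin n | 0 < lam i}.ncard = p ∧ {i : Fin n | lam i < 0}.ncard = q}

/-- The metric projection `Π₊` onto the positive semidefinite cone (defined through an
eigenvalue decomposition; the value is independent of the choice of decomposition). -/
noncomputable def piPlus {n : ℕ} (A : Mat n) : Mat n :=
  if h : ∃ P lam, IsEigDecomp A P lam then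
    h.choose * Matrix.diagonal (fun i => max (h.choose_spec.choose i) 0) * h.chooseᵀ
  else 0

variable {m n : ℕ}

/-- `G(z) = g(x) + y`. -/
def Gmap (g : Em m → Mat n) (z : Em m × Mat n) : Mat n := g z.1 + z.2

/-- The adjoint `∇g(x) : Sⁿ → ℝᵐ` of the derivative `g'(x)`, characterized by
`⟨∇g(x)H, v⟩ = ⟨H, g'(x)v⟩`. -/
def gradg (g : Em m → Mat n) (x : Em m) (H : Mat n) : Em m :=
  (EuclideanSpace.equiv (Fin m) ℝ).symm
    fun k => (Hᵀ * fderiv ℝ g x (EuclideanSpace.single k 1)).trace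

/-- The Lagrangian `L(x,y) = f(x) + ⟨y, g(x)⟩`. -/
def Lfun (f : Em m → ℝ) (g : Em m → Mat n) (x : Em m) (y : Mat n) : ℝ :=
  f x + minner y (g x)

/-- The Hessian `∇²ₓₓL(x,y)` of `x ↦ L(x,y)`, as a continuous linear map `ℝᵐ → ℝᵐ`. -/
def hessL (f : Em m → ℝ) (g : Em m → Mat n) (x : Em m) (y : Mat n) : Em m →L[ℝ] Em m :=
  fderiv ℝ (fun u => gradient (fun w => Lfun f g w y) u) x

/-- The KKT mapping `F(z) = (∇f(x) + ∇g(x)y, −g(x) + Π₊(G(z)))`. -/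
def KKTF (f : Em m → ℝ) (g : Em m → Mat n) (z : Em m × Mat n) : Em m × Mat n :=
  (gradient f z.1 + gradg g z.1 z.2, - g z.1 + piPlus (Gmap g z))

/-- The lifted stratum `M̃_{p,q} = {z = (x,y) ∈ ℝᵐ × Sⁿ : G(z) ∈ M_{p,q}}`. -/
def lstratum (g : Em m → Mat n) (p q : ℕ) : Set (Em m × Mat n) :=
  {z | z.2.IsSymm ∧ Gmap g z ∈ stratum n p q}

/-- The norm `‖(u,H)‖ = sqrt(‖u‖² + ‖H‖²)` on `ℝᵐ × Sⁿ` (Frobenius norm on matrices). -/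
def pnorm {m n : ℕ} (w : Em m × Mat n) : ℝ := Real.sqrt (‖w.1‖ ^ 2 + ‖w.2‖ ^ 2)

/-- The weak strict Robinson constraint qualification (W-SRCQ) at `z`:
`g'(x)[ℝᵐ] + {PBPᵀ : B ∈ Sⁿ, B_{βγ} = 0, B_{γγ} = 0} = Sⁿ`
(for any eigenvalue decomposition `(P, lam)` of `G(z)`; independent of the choice). -/
def WSRCQ (g : Em m → Mat n) (z : Em m × Mat n) : Prop :=
  ∀ P lam, IsEigDecomp (Gmap g z) P lam →
    ∀ C : Mat n, C.IsSymm →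
      ∃ (v : Em m) (B : Mat n), B.IsSymm ∧
        (∀ i j, lam i = 0 → lam j < 0 → B i j = 0) ∧
        (∀ i j, lam i < 0 → lam j < 0 → B i j = 0) ∧
        C = fderiv ℝ g z.1 v + P * B * Pᵀ

/-- The constraint nondegeneracy at `z`:
`g'(x)[ℝᵐ] + {PBPᵀ : B ∈ Sⁿ, B_{ββ} = 0, B_{βγ} = 0, B_{γγ} = 0} = Sⁿ`. -/
def CNondeg (g : Em m → Mat n) (z : Em m × Mat n) : Prop :=
  ∀ P lam, IsEigDecomp (Gmap g z) P lam →
    ∀ C : Mat n, C.IsSymm →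
      ∃ (v : Em m) (B : Mat n), B.IsSymm ∧
        (∀ i j, lam i = 0 → lam j = 0 → B i j = 0) ∧
        (∀ i j, lam i = 0 → lam j < 0 → B i j = 0) ∧
        (∀ i j, lam i < 0 → lam j < 0 → B i j = 0) ∧
        C = fderiv ℝ g z.1 v + P * B * Pᵀ

/-- The strict Robinson constraint qualification (SRCQ) at a KKT pair `z`:
`g'(x)[ℝᵐ] + {PBPᵀ : B ∈ Sⁿ, B_{ββ} ⪰ 0, B_{βγ} = 0, B_{γγ} = 0} = Sⁿ`. -/
def SRCQ (g : Em m → Mat n) (z : Em m × Mat n) : Prop :=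
  ∀ P lam, IsEigDecomp (Gmap g z) P lam →
    ∀ C : Mat n, C.IsSymm →
      ∃ (v : Em m) (B : Mat n), B.IsSymm ∧
        (∀ u : Fin n → ℝ, (∀ i, lam i ≠ 0 → u i = 0) →
          0 ≤ ∑ i, ∑ j, u i * B i j * u j) ∧
        (∀ i j, lam i = 0 → lam j < 0 → B i j = 0) ∧
        (∀ i j, lam i < 0 → lam j < 0 → B i j = 0) ∧
        C = fderiv ℝ g z.1 v + P * B * Pᵀ

/-- The quadratic form
`Q(z,v) = ⟨v, ∇²ₓₓL(x,y)v⟩ + 2·Σ_{i∈α}Σ_{j∈γ} (−λⱼ/λᵢ)·([Pᵀ(g'(x)v)P]_{ij})²`. -/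
def Qform (f : Em m → ℝ) (g : Em m → Mat n) (z : Em m × Mat n)
    (P : Mat n) (lam : Fin n → ℝ) (v : Em m) : ℝ :=
  ⟪v, hessL f g z.1 z.2 v⟫ +
    2 * ∑ i : Fin n, ∑ j : Fin n,
      (if 0 < lam i ∧ lam j < 0 then
        (-lam j / lam i) * ((Pᵀ * fderiv ℝ g z.1 v * P) i j) ^ 2 else 0)

/-- `v ∈ appl(z)`: the blocks `ββ`, `βγ`, `γγ` of `Pᵀ(g'(x)v)P` vanish. -/
def memAppl (g : Em m → Mat n) (z : Em m × Mat n)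
    (P : Mat n) (lam : Fin n → ℝ) (v : Em m) : Prop :=
  (∀ i j, lam i = 0 → lam j = 0 → (Pᵀ * fderiv ℝ g z.1 v * P) i j = 0) ∧
  (∀ i j, lam i = 0 → lam j < 0 → (Pᵀ * fderiv ℝ g z.1 v * P) i j = 0) ∧
  (∀ i j, lam i < 0 → lam j < 0 → (Pᵀ * fderiv ℝ g z.1 v * P) i j = 0)

/-- `v ∈ app(z)`: the blocks `βγ`, `γγ` of `Pᵀ(g'(x)v)P` vanish. -/
def memApp (g : Em m → Mat n) (z : Em m × Mat n)
    (P : Mat n) (lam : Fin n → ℝ) (v : Em m) : Prop :=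
  (∀ i j, lam i = 0 → lam j < 0 → (Pᵀ * fderiv ℝ g z.1 v * P) i j = 0) ∧
  (∀ i j, lam i < 0 → lam j < 0 → (Pᵀ * fderiv ℝ g z.1 v * P) i j = 0)

/-- The weak second order condition (W-SOC) at `z`: `Q(z,v) ≠ 0` for every nonzero
`v ∈ appl(z)`. -/
def WSOC (f : Em m → ℝ) (g : Em m → Mat n) (z : Em m × Mat n) : Prop :=
  ∀ P lam, IsEigDecomp (Gmap g z) P lam →
    ∀ v : Em m, v ≠ 0 → memAppl g z P lam v → Qform f g z P lam v ≠ 0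

/-- The strong second order sufficient condition (S-SOSC) at `z`: `Q(z,v) > 0` for every
nonzero `v ∈ app(z)`. -/
def SSOSC (f : Em m → ℝ) (g : Em m → Mat n) (z : Em m × Mat n) : Prop :=
  ∀ P lam, IsEigDecomp (Gmap g z) P lam →
    ∀ v : Em m, v ≠ 0 → memApp g z P lam v → 0 < Qform f g z P lam v

/-- The second order necessary condition (SONC) at `z`. -/
def SONC (f : Em m → ℝ) (g : Em m → Mat n) (z : Em m × Mat n) : Prop :=
  ∀ P lam, IsEigDecomp (Gmap g z) P lam →
    ∀ v : Em m, v ≠ 0 →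
      (∀ u : Fin n → ℝ, (∀ i, lam i ≠ 0 → u i = 0) →
        0 ≤ ∑ i, ∑ j, u i * (Pᵀ * fderiv ℝ g z.1 v * P) i j * u j) →
      memApp g z P lam v → 0 ≤ Qform f g z P lam v

/-- The W-SOC holds uniformly on a set `S`: there is `c > 0` with `Q(z,v) ≥ c‖v‖²` for
every `z ∈ S` (in `ℝᵐ × Sⁿ`) and every `v ∈ appl(z)`. -/
def UnifWSOC (f : Em m → ℝ) (g : Em m → Mat n) (S : Set (Em m × Mat n)) : Prop :=
  ∃ c : ℝ, 0 < c ∧ ∀ z ∈ S, z.2.IsSymm →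
    ∀ P lam, IsEigDecomp (Gmap g z) P lam →
      ∀ v : Em m, memAppl g z P lam v → c * ‖v‖ ^ 2 ≤ Qform f g z P lam v

/-- `H ∈ T_z`: `H ∈ Sⁿ` with `(PᵀHP)_{ββ} = 0`. -/
def memTz {n : ℕ} (P : Mat n) (lam : Fin n → ℝ) (H : Mat n) : Prop :=
  H.IsSymm ∧ ∀ i j, lam i = 0 → lam j = 0 → (Pᵀ * H * P) i j = 0

/-- `Δ ∈ N_{G(z)}M_{p,q}`: `Δ ∈ Sⁿ` and `(PᵀΔP)_{ij} = 0` whenever `i ∉ β` or `j ∉ β`. -/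
def memNormal {n : ℕ} (P : Mat n) (lam : Fin n → ℝ) (Δ : Mat n) : Prop :=
  Δ.IsSymm ∧ ∀ i j, (lam i ≠ 0 ∨ lam j ≠ 0) → (Pᵀ * Δ * P) i j = 0

/-- The map `ξ_z : T_z → Sⁿ`, `ξ_z(H) = P·M·Pᵀ`. -/
def xiMap {n : ℕ} (P : Mat n) (lam : Fin n → ℝ) (H : Mat n) : Mat n :=
  P * (Matrix.of fun i j =>
    if 0 < lam i ∧ 0 < lam j then (Pᵀ * H * P) i j
    else if 0 < lam i ∧ lam j = 0 then (Pᵀ * H * P) i j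
    else if lam i = 0 ∧ 0 < lam j then (Pᵀ * H * P) i j
    else if 0 < lam i ∧ lam j < 0 then (lam i / (lam i - lam j)) * (Pᵀ * H * P) i j
    else if lam i < 0 ∧ 0 < lam j then (lam j / (lam j - lam i)) * (Pᵀ * H * P) i j
    else 0) * Pᵀ

/-- The linear map `𝒜_z(v,H) = (∇²ₓₓL(x,y)v − ∇g(x)(g'(x)v) + ∇g(x)H, −g'(x)v + ξ_z(H))`. -/
def Amap (f : Em m → ℝ) (g : Em m → Mat n) (z : Em m × Mat n)
    (P : Mat n) (lam : Fin n → ℝ) (v : Em m) (H : Mat n) : Em m × Mat n :=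
  (hessL f g z.1 z.2 v - gradg g z.1 (fderiv ℝ g z.1 v) + gradg g z.1 H,
    - fderiv ℝ g z.1 v + xiMap P lam H)

/-- The positive inertia index of `A` is `p`. -/
def posInertiaIs {n : ℕ} (A : Mat n) (p : ℕ) : Prop :=
  ∃ P lam, IsEigDecomp A P lam ∧ {i : Fin n | 0 < lam i}.ncard = p

/-- The negative inertia index of `A` is `q`. -/
def negInertiaIs {n : ℕ} (A : Mat n) (q : ℕ) : Prop :=
  ∃ P lam, IsEigDecomp A P lam ∧ {i : Fin n | lam i < 0}.ncard = q

end

noncomputable instance instNormedCLMEmMat {m n : ℕ} : NormedAddCommGroup (Em m →L[ℝ] Mat n) :=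
  ContinuousLinearMap.toNormedAddCommGroup

noncomputable instance instNormedSpaceCLMEmMat {m n : ℕ} : NormedSpace ℝ (Em m →L[ℝ] Mat n) :=
  ContinuousLinearMap.toNormedSpace

section helpers
open Filter Topology

lemma charpoly_conj_orth {n : ℕ} (P M : Mat n) (h1 : P * Pᵀ = 1) :
    (P * M * Pᵀ).charpoly = M.charpoly := by
  classical
  unfold Matrix.charpoly
  have hmm : ∀ A B : Mat n, (Polynomial.C : ℝ →+* Polynomial ℝ).mapMatrix (A * B)
      = (Polynomial.C : ℝ →+* Polynomial ℝ).mapMatrix A *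
        (Polynomial.C : ℝ →+* Polynomial ℝ).mapMatrix B := fun A B => by
    simp [_root_.map_mul]
  have key : charmatrix (P * M * Pᵀ) =
      ((Polynomial.C : ℝ →+* Polynomial ℝ).mapMatrix P) * charmatrix M *
        ((Polynomial.C : ℝ →+* Polynomial ℝ).mapMatrix Pᵀ) := by
    unfold charmatrix
    rw [mul_sub, sub_mul]
    congr 1
    · have h : (Matrix.scalar (Fin n) (Polynomial.X : Polynomial ℝ))
          = (Polynomial.X : Polynomial ℝ) • (1 : Matrix (Fin n) (Fin n) (Polynomial ℝ)) := by
        simp [Matrix.smul_one_eq_diagonal]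
      rw [h, Matrix.mul_smul, Matrix.mul_one, Matrix.smul_mul, ← hmm, h1]
      simp
    · rw [hmm, hmm]
  rw [key, det_mul, det_mul]
  have hdet : ((Polynomial.C : ℝ →+* Polynomial ℝ).mapMatrix P).det *
      ((Polynomial.C : ℝ →+* Polynomial ℝ).mapMatrix Pᵀ).det = 1 := by
    rw [← det_mul, ← hmm, h1]; simp
  calc ((Polynomial.C : ℝ →+* Polynomial ℝ).mapMatrix P).det * (charmatrix M).det *
        ((Polynomial.C : ℝ →+* Polynomial ℝ).mapMatrix Pᵀ).det
      = (((Polynomial.C : ℝ →+* Polynomial ℝ).mapMatrix P).det *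
          ((Polynomial.C : ℝ →+* Polynomial ℝ).mapMatrix Pᵀ).det) * (charmatrix M).det := by ring
    _ = (charmatrix M).det := by rw [hdet, one_mul]

lemma charpoly_diag {n : ℕ} (d : Fin n → ℝ) :
    (Matrix.diagonal d).charpoly = ∏ i, (Polynomial.X - Polynomial.C (d i)) := by
  classical
  have h : charmatrix (Matrix.diagonal d)
      = Matrix.diagonal (fun i => (Polynomial.X : Polynomial ℝ) - Polynomial.C (d i)) := by
    ext i j
    by_cases h : i = j
    · subst h; simp
    · simp [h, Matrix.diagonal_apply_ne _ h]
  rw [Matrix.charpoly, h, det_diagonal]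

lemma eig_unique {n : ℕ} {A P P' : Mat n} {lam lam' : Fin n → ℝ}
    (h : IsEigDecomp A P lam) (h' : IsEigDecomp A P' lam') : lam = lam' := by
  classical
  obtain ⟨⟨hP1, hP2⟩, hmono, hAeq⟩ := h
  obtain ⟨⟨hQ1, hQ2⟩, hmono', hAEq2'⟩ := h'
  have hcp : ∏ i, ((Polynomial.X : Polynomial ℝ) - Polynomial.C (lam i))
      = ∏ i, ((Polynomial.X : Polynomial ℝ) - Polynomial.C (lam' i)) := by
    have c1 : (Matrix.diagonal lam).charpoly = A.charpoly := by
      rw [hAeq, charpoly_conj_orth _ _ hP1]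
    have c2 : (Matrix.diagonal lam').charpoly = A.charpoly := by
      rw [hAEq2', charpoly_conj_orth _ _ hQ1]
    rw [← charpoly_diag lam, ← charpoly_diag lam', c1, c2]
  have hms : (Finset.univ.val.map lam) = (Finset.univ.val.map lam') := by
    have e1 : ∀ (f : Fin n → ℝ), ∏ i, ((Polynomial.X : Polynomial ℝ) - Polynomial.C (f i))
        = ((Finset.univ.val.map f).map
            (fun a => (Polynomial.X : Polynomial ℝ) - Polynomial.C a)).prod := by
      intro f; rw [Multiset.map_map]; rfl
    have h2 := hcp
    rw [e1 lam, e1 lam'] at h2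
    have h3 := congrArg Polynomial.roots h2
    rwa [Polynomial.roots_multiset_prod_X_sub_C, Polynomial.roots_multiset_prod_X_sub_C] at h3
  have hcoe : (Finset.univ.val : Multiset (Fin n))
      = ((List.finRange n : List (Fin n)) : Multiset (Fin n)) := rfl
  have hperm : (List.ofFn lam).Perm (List.ofFn lam') := by
    rw [List.ofFn_eq_map, List.ofFn_eq_map, ← Multiset.coe_eq_coe, ← Multiset.map_coe,
      ← Multiset.map_coe, ← hcoe]
    exact hms
  have hs : ∀ (f : Fin n → ℝ), Antitone f → (List.ofFn f).Pairwise (· ≥ ·) := by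
    intro f hf
    rw [List.pairwise_ofFn]
    intro i j hij
    exact hf hij.le
  exact List.ofFn_injective (List.Perm.eq_of_pairwise' (hs lam hmono) (hs lam' hmono') hperm)

lemma antitone_pos_iff {n p : ℕ} {lam : Fin n → ℝ} (hm : Antitone lam)
    (hc : {i : Fin n | 0 < lam i}.ncard = p) (i : Fin n) : 0 < lam i ↔ (i : ℕ) < p := by
  classical
  have hcard : (Finset.univ.filter (fun j => 0 < lam j)).card = p := by
    rw [← hc, Set.ncard_eq_toFinset_card']
    congr 1
    ext j; simp
  constructor
  · intro hi
    have hsub : (Finset.Iic i : Finset (Fin n)) ⊆ Finset.univ.filter (fun j => 0 < lam j) := by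
      intro j hj
      simp only [Finset.mem_Iic] at hj
      simp only [Finset.mem_filter, Finset.mem_univ, true_and]
      exact lt_of_lt_of_le hi (hm hj)
    have hle := Finset.card_le_card hsub
    rw [Fin.card_Iic, hcard] at hle
    omega
  · intro hip
    by_contra hneg
    push_neg at hneg
    have hsub : Finset.univ.filter (fun j => 0 < lam j) ⊆ (Finset.Iio i : Finset (Fin n)) := by
      intro j hj
      simp only [Finset.mem_filter, Finset.mem_univ, true_and] at hj
      simp only [Finset.mem_Iio]
      by_contra hji
      push_neg at hji
      exact absurd (lt_of_lt_of_le hj (hm hji)) (not_lt.mpr hneg)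
    have hle := Finset.card_le_card hsub
    rw [Fin.card_Iio, hcard] at hle
    omega

lemma cont_entry {n : ℕ} (i j : Fin n) : Continuous (fun M : Mat n => M i j) := by
  have hl : IsLinearMap ℝ (fun M : Mat n => M i j) := by
    constructor <;> intros <;> rfl
  exact (hl.mk' _).continuous_of_finiteDimensional

lemma fro_norm_eq_sqrt {n : ℕ} (M : Mat n) : ‖M‖ = Real.sqrt (∑ i, ∑ j, (M i j)^2) := by
  rw [Matrix.frobenius_norm_def, Real.sqrt_eq_rpow]
  congr 1
  refine Finset.sum_congr rfl fun i _ => Finset.sum_congr rfl fun j _ => ?_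
  rw [Real.rpow_two, Real.norm_eq_abs, sq_abs]

lemma entry_abs_le_norm {n : ℕ} (M : Mat n) (i j : Fin n) : |M i j| ≤ ‖M‖ := by
  rw [fro_norm_eq_sqrt, ← Real.sqrt_sq_eq_abs]
  apply Real.sqrt_le_sqrt
  have h1 : (M i j)^2 ≤ ∑ b, (M i b)^2 :=
    Finset.single_le_sum (f := fun b => (M i b)^2) (fun b _ => sq_nonneg _) (Finset.mem_univ j)
  refine le_trans h1 ?_
  exact Finset.single_le_sum (f := fun a => ∑ b, (M a b)^2)
    (fun a _ => Finset.sum_nonneg fun b _ => sq_nonneg _) (Finset.mem_univ i)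

lemma orth_norm_eq {n : ℕ} {P : Mat n} (h : P * Pᵀ = 1) : ‖P‖ = Real.sqrt n := by
  rw [fro_norm_eq_sqrt]
  congr 1
  have hrow : ∀ i, ∑ j, (P i j)^2 = 1 := by
    intro i
    have he : (P * Pᵀ) i i = 1 := by rw [h, Matrix.one_apply_eq]
    rw [Matrix.mul_apply] at he
    simpa [Matrix.transpose_apply, sq] using he
  simp [hrow]

lemma eig_abs_le {n : ℕ} {A P : Mat n} {lam : Fin n → ℝ}
    (h : IsEigDecomp A P lam) (a : Fin n) :
    |lam a| ≤ Real.sqrt n * ‖A‖ * Real.sqrt n := by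
  obtain ⟨⟨h1, h2⟩, _, hAeq⟩ := h
  have hD : Pᵀ * A * P = Matrix.diagonal lam := by
    rw [hAeq]
    have e1 : Pᵀ * (P * Matrix.diagonal lam * Pᵀ) * P
        = (Pᵀ * P) * (Matrix.diagonal lam * (Pᵀ * P)) := by
      simp only [Matrix.mul_assoc]
    rw [e1, h2, Matrix.mul_one, Matrix.one_mul]
  have hval : lam a = (Pᵀ * A * P) a a := by rw [hD, Matrix.diagonal_apply_eq]
  rw [hval]
  refine le_trans (entry_abs_le_norm _ a a) ?_
  refine le_trans (Matrix.frobenius_norm_mul _ _) ?_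
  have hb : ‖Pᵀ * A‖ ≤ Real.sqrt n * ‖A‖ := by
    refine le_trans (Matrix.frobenius_norm_mul _ _) ?_
    rw [Matrix.frobenius_norm_transpose, orth_norm_eq h1]
  have hP : ‖P‖ = Real.sqrt n := orth_norm_eq h1
  calc ‖Pᵀ * A‖ * ‖P‖ ≤ (Real.sqrt n * ‖A‖) * ‖P‖ :=
        mul_le_mul_of_nonneg_right hb (norm_nonneg _)
    _ = Real.sqrt n * ‖A‖ * Real.sqrt n := by rw [hP]

lemma conjdiag_entry {n : ℕ} (P : Mat n) (lam : Fin n → ℝ) (i j : Fin n) :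
    (P * Matrix.diagonal lam * Pᵀ) i j = ∑ a, P i a * lam a * P j a := by
  rw [Matrix.mul_apply]
  refine Finset.sum_congr rfl fun a _ => ?_
  simp [Matrix.mul_diagonal, Matrix.transpose_apply]

lemma conj_entry_formula {n : ℕ} (Q M : Mat n) (i j : Fin n) :
    (Qᵀ * M * Q) i j = ∑ b, (∑ a, Q a i * M a b) * Q b j := by
  rw [Matrix.mul_apply]
  refine Finset.sum_congr rfl fun b _ => ?_
  rw [Matrix.mul_apply]
  simp [Matrix.transpose_apply]

lemma conj_entry_symm {n : ℕ} (P M : Mat n) (hM : Mᵀ = M) (i j : Fin n) :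
    (Pᵀ * M * P) i j = (Pᵀ * M * P) j i := by
  have h : (Pᵀ * M * P)ᵀ = Pᵀ * M * P := by
    rw [Matrix.transpose_mul, Matrix.transpose_mul, Matrix.transpose_transpose, hM,
      Matrix.mul_assoc]
  conv_lhs => rw [← h]
  rw [Matrix.transpose_apply]

lemma fderiv_g_isSymm {m n : ℕ} {g : Em m → Mat n} (hgd : Differentiable ℝ g)
    (hgs : ∀ x, (g x).IsSymm) (x : Em m) (v : Em m) :
    (fderiv ℝ g x v)ᵀ = fderiv ℝ g x v := by
  have hT : IsLinearMap ℝ (fun M : Mat n => Mᵀ) :=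
    ⟨fun a b => Matrix.transpose_add a b, fun c a => Matrix.transpose_smul c a⟩
  set T : Mat n →L[ℝ] Mat n := LinearMap.toContinuousLinearMap (hT.mk' _) with hTdef
  have hTg : g = fun x => T (g x) := by
    funext u
    exact (hgs u).symm
  have hfd : fderiv ℝ g x = T.comp (fderiv ℝ g x) := by
    conv_lhs => rw [hTg]
    exact (T.hasFDerivAt.comp x (hgd x).hasFDerivAt).fderiv
  have happ : fderiv ℝ g x v = T (fderiv ℝ g x v) := by
    conv_lhs => rw [hfd]
    rfl
  exact happ.symm

noncomputable def minCLM {n : ℕ} (y : Mat n) : Mat n →L[ℝ] ℝ :=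
  LinearMap.toContinuousLinearMap
    ((Matrix.traceLinearMap (Fin n) ℝ ℝ).comp (LinearMap.mulLeft ℝ yᵀ))

lemma minCLM_apply {n : ℕ} (y M : Mat n) : minCLM y M = (yᵀ * M).trace := rfl

lemma minCLM_cont {n : ℕ} : Continuous (fun y : Mat n => minCLM y) := by
  have hl : IsLinearMap ℝ (fun y : Mat n => minCLM y) := by
    constructor
    · intro a b
      apply ContinuousLinearMap.ext
      intro M
      simp [minCLM_apply, Matrix.transpose_add, Matrix.add_mul]
    · intro c a
      apply ContinuousLinearMap.ext
      intro M
      simp [minCLM_apply, Matrix.transpose_smul, Matrix.smul_mul]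
  exact (hl.mk' _).continuous_of_finiteDimensional

noncomputable def jmap (m : ℕ) : (Em m →L[ℝ] ℝ) →L[ℝ] Em m :=
  LinearMap.toContinuousLinearMap
    { toFun := fun D => (InnerProductSpace.toDual ℝ (Em m)).symm D
      map_add' := fun a b => map_add _ a b
      map_smul' := fun c D => by simp }

lemma gradient_eq_jmap {m : ℕ} (h : Em m → ℝ) (u : Em m) :
    gradient h u = jmap m (fderiv ℝ h u) := rfl

lemma hessL_eq {m n : ℕ} (f : Em m → ℝ) (g : Em m → Mat n)
    (hf : ContDiff ℝ 2 f) (hg : ContDiff ℝ 2 g) (x : Em m) (y : Mat n) :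
    hessL f g x y = (jmap m).comp
      ((fderiv ℝ (fderiv ℝ f) x) +
        (ContinuousLinearMap.compL ℝ (Em m) (Mat n) ℝ (minCLM y)).comp
          (fderiv ℝ (fderiv ℝ g) x)) := by
  have hfd : Differentiable ℝ f := hf.differentiable (by norm_num)
  have hgd : Differentiable ℝ g := hg.differentiable (by norm_num)
  have hf1 : ContDiff ℝ 1 (fderiv ℝ f) := hf.fderiv_right (by norm_num)
  have hg1 : ContDiff ℝ 1 (fderiv ℝ g) := hg.fderiv_right (m := 1) (by norm_num)
  have hL : ∀ u, fderiv ℝ (fun w => Lfun f g w y) u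
      = fderiv ℝ f u + (minCLM y).comp (fderiv ℝ g u) := by
    intro u
    have h2 : HasFDerivAt (fun w => minCLM y (g w)) ((minCLM y).comp (fderiv ℝ g u)) u :=
      (minCLM y).hasFDerivAt.comp u (hgd u).hasFDerivAt
    have hrw : (fun w => Lfun f g w y) = fun w => f w + minCLM y (g w) := rfl
    rw [hrw]
    exact ((hfd u).hasFDerivAt.add h2).fderiv
  have hgrad : (fun u => gradient (fun w => Lfun f g w y) u)
      = fun u => jmap m (fderiv ℝ f u + (minCLM y).comp (fderiv ℝ g u)) := by
    funext u
    rw [gradient_eq_jmap, hL u]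
  unfold hessL
  rw [hgrad]
  have hF : HasFDerivAt (fun u => fderiv ℝ f u + (minCLM y).comp (fderiv ℝ g u))
      ((fderiv ℝ (fderiv ℝ f) x) +
        (ContinuousLinearMap.compL ℝ (Em m) (Mat n) ℝ (minCLM y)).comp
          (fderiv ℝ (fderiv ℝ g) x)) x := by
    have ha : HasFDerivAt (fderiv ℝ f) (fderiv ℝ (fderiv ℝ f) x) x :=
      (hf1.differentiable one_ne_zero x).hasFDerivAt
    have hb : HasFDerivAt
        (fun u => (ContinuousLinearMap.compL ℝ (Em m) (Mat n) ℝ (minCLM y)) (fderiv ℝ g u))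
        ((ContinuousLinearMap.compL ℝ (Em m) (Mat n) ℝ (minCLM y)).comp
          (fderiv ℝ (fderiv ℝ g) x)) x :=
      (ContinuousLinearMap.compL ℝ (Em m) (Mat n) ℝ (minCLM y)).hasFDerivAt.comp x
        (hg1.differentiable one_ne_zero x).hasFDerivAt
    exact ha.add hb
  exact ((jmap m).hasFDerivAt.comp x hF).fderiv

lemma hessL_cont {m n : ℕ} (f : Em m → ℝ) (g : Em m → Mat n)
    (hf : ContDiff ℝ 2 f) (hg : ContDiff ℝ 2 g) :
    Continuous (fun w : (Em m × Mat n) × Em m => (hessL f g w.1.1 w.1.2) w.2) := by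
  have hf1 : ContDiff ℝ 1 (fderiv ℝ f) := hf.fderiv_right (by norm_num)
  have hg1 : ContDiff ℝ 1 (fderiv ℝ g) := hg.fderiv_right (m := 1) (by norm_num)
  have c2f : Continuous (fderiv ℝ (fderiv ℝ f)) := hf1.continuous_fderiv one_ne_zero
  have c2g : Continuous (fderiv ℝ (fderiv ℝ g)) := hg1.continuous_fderiv one_ne_zero
  have key : (fun w : (Em m × Mat n) × Em m => (hessL f g w.1.1 w.1.2) w.2)
      = fun w => jmap m ((fderiv ℝ (fderiv ℝ f) w.1.1) w.2
          + (minCLM w.1.2).comp ((fderiv ℝ (fderiv ℝ g) w.1.1) w.2)) := by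
    funext w
    rw [hessL_eq f g hf hg]
    rfl
  rw [key]
  apply (jmap m).continuous.comp
  apply Continuous.add
  · exact (c2f.comp (continuous_fst.comp continuous_fst)).clm_apply continuous_snd
  · exact Continuous.clm_comp (minCLM_cont.comp (continuous_snd.comp continuous_fst))
      ((c2g.comp (continuous_fst.comp continuous_fst)).clm_apply continuous_snd)

lemma entry_smul_conj {m n : ℕ} (g : Em m → Mat n) (z : Em m × Mat n) (P : Mat n)
    (c : ℝ) (v : Em m) (i j : Fin n) :
    (Pᵀ * fderiv ℝ g z.1 (c • v) * P) i j = c * ((Pᵀ * fderiv ℝ g z.1 v * P) i j) := by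
  rw [(fderiv ℝ g z.1).map_smul, Matrix.mul_smul, Matrix.smul_mul, Matrix.smul_apply,
    smul_eq_mul]

lemma memAppl_smul {m n : ℕ} (g : Em m → Mat n) (z : Em m × Mat n) (P : Mat n)
    (lam : Fin n → ℝ) (c : ℝ) {v : Em m} (h : memAppl g z P lam v) :
    memAppl g z P lam (c • v) := by
  obtain ⟨h1, h2, h3⟩ := h
  refine ⟨fun i j hi hj => ?_, fun i j hi hj => ?_, fun i j hi hj => ?_⟩
  · rw [entry_smul_conj, h1 i j hi hj, mul_zero]
  · rw [entry_smul_conj, h2 i j hi hj, mul_zero]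
  · rw [entry_smul_conj, h3 i j hi hj, mul_zero]

lemma Qform_smul {m n : ℕ} (f : Em m → ℝ) (g : Em m → Mat n) (z : Em m × Mat n)
    (P : Mat n) (lam : Fin n → ℝ) (c : ℝ) (v : Em m) :
    Qform f g z P lam (c • v) = c^2 * Qform f g z P lam v := by
  unfold Qform
  have h1 : ⟪c • v, hessL f g z.1 z.2 (c • v)⟫ = c^2 * ⟪v, hessL f g z.1 z.2 v⟫ := by
    rw [(hessL f g z.1 z.2).map_smul, real_inner_smul_left, real_inner_smul_right]
    ring
  have h3 : (∑ i : Fin n, ∑ j : Fin n,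
      (if 0 < lam i ∧ lam j < 0 then
        (-lam j / lam i) * ((Pᵀ * fderiv ℝ g z.1 (c • v) * P) i j) ^ 2 else 0))
      = c^2 * ∑ i : Fin n, ∑ j : Fin n,
      (if 0 < lam i ∧ lam j < 0 then
        (-lam j / lam i) * ((Pᵀ * fderiv ℝ g z.1 v * P) i j) ^ 2 else 0) := by
    rw [Finset.mul_sum]
    refine Finset.sum_congr rfl fun i _ => ?_
    rw [Finset.mul_sum]
    refine Finset.sum_congr rfl fun j _ => ?_
    rw [entry_smul_conj]
    split_ifs with h
    · ring
    · ring
  rw [h1, h3]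
  ring

end helpers

section mainproof
open Filter Topology

set_option maxHeartbeats 4000000 in
/-- Openness of the W-SOC along points with the same positive inertia
index: if the W-SOC holds at `z̄` and `p` is the positive inertia index of `G(z̄)`, then it
holds at all nearby `z ∈ ℝᵐ × Sⁿ` whose `G(z)` has positive inertia index `p`. -/
theorem WSOC_open_fixed_positive_inertia {m n p : ℕ}
    (f : Em m → ℝ) (g : Em m → Mat n)
    (hf : ContDiff ℝ 2 f) (hg : ContDiff ℝ 2 g) (hgs : ∀ x, (g x).IsSymm)
    (zbar : Em m × Mat n) (hsym : zbar.2.IsSymm)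
    (hp : posInertiaIs (Gmap g zbar) p)
    (hW : WSOC f g zbar) :
    ∃ U : Set (Em m × Mat n), IsOpen U ∧ zbar ∈ U ∧
      ∀ z ∈ U, z.2.IsSymm → posInertiaIs (Gmap g z) p → WSOC f g z := by
  classical
  by_contra hcon
  push_neg at hcon
  have hstep : ∀ k : ℕ, ∃ z : Em m × Mat n, dist z zbar < 1/((k:ℝ)+1) ∧ z.2.IsSymm ∧
      posInertiaIs (Gmap g z) p ∧ ¬WSOC f g z := by
    intro k
    have hopen : IsOpen (Metric.ball zbar (1/((k:ℝ)+1))) := Metric.isOpen_ball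
    have hmem : zbar ∈ Metric.ball zbar (1/((k:ℝ)+1)) := Metric.mem_ball_self (by positivity)
    obtain ⟨z, hz, h1, h2, h3⟩ := hcon _ hopen hmem
    exact ⟨z, Metric.mem_ball.mp hz, h1, h2, h3⟩
  choose z hzd hzsym hzpos hznW using hstep
  have hwit : ∀ k, ∃ P lam v, IsEigDecomp (Gmap g (z k)) P lam ∧ ‖v‖ = 1 ∧
      memAppl g (z k) P lam v ∧ Qform f g (z k) P lam v = 0 := by
    intro k
    have h := hznW k
    unfold WSOC at h
    push_neg at h
    obtain ⟨P, lam, hdec, v, hv0, hmem, hq⟩ := h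
    refine ⟨P, lam, ‖v‖⁻¹ • v, hdec, ?_, memAppl_smul _ _ _ _ _ hmem, ?_⟩
    · rw [norm_smul, norm_inv, norm_norm, inv_mul_cancel₀ (norm_ne_zero_iff.mpr hv0)]
    · rw [Qform_smul, hq, mul_zero]
  choose P lam v hdec hv1 hmem hq using hwit
  -- continuity of Gmap
  have contG : Continuous (fun w : Em m × Mat n => Gmap g w) := by
    have h := (hg.continuous.comp (continuous_fst : Continuous (fun w : Em m × Mat n => w.1))).add
      (continuous_snd : Continuous (fun w : Em m × Mat n => w.2))
    exact h
  obtain ⟨R, hR⟩ : ∃ R, ∀ w ∈ Metric.closedBall zbar 1, ‖Gmap g w‖ ≤ R :=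
    (isCompact_closedBall zbar 1).exists_bound_of_continuousOn contG.continuousOn
  have hzK : ∀ k, z k ∈ Metric.closedBall zbar 1 := by
    intro k
    refine Metric.mem_closedBall.mpr (le_trans (hzd k).le ?_)
    rw [div_le_one (by positivity)]
    have : (0:ℝ) ≤ (k:ℝ) := Nat.cast_nonneg k
    linarith
  -- bounds
  set Clam : ℝ := Real.sqrt n * R * Real.sqrt n with hClam
  have hlambd : ∀ k a, |lam k a| ≤ Clam := by
    intro k a
    refine le_trans (eig_abs_le (hdec k) a) ?_
    have h1 : ‖Gmap g (z k)‖ ≤ R := hR _ (hzK k)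
    have h2 : (0:ℝ) ≤ Real.sqrt n := Real.sqrt_nonneg _
    calc Real.sqrt n * ‖Gmap g (z k)‖ * Real.sqrt n ≤ Real.sqrt n * R * Real.sqrt n := by
          apply mul_le_mul_of_nonneg_right _ h2
          exact mul_le_mul_of_nonneg_left h1 h2
      _ = Clam := rfl
  set R0 : ℝ := max (Real.sqrt n) (max (max Clam 0) 1) with hR0
  have hWb : ∀ k, (P k, (lam k, v k)) ∈
      Metric.closedBall (0 : Mat n × ((Fin n → ℝ) × Em m)) R0 := by
    intro k
    rw [Metric.mem_closedBall, dist_zero_right, Prod.norm_def, Prod.norm_def]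
    apply max_le
    · rw [orth_norm_eq (hdec k).1.1]
      exact le_max_left _ _
    · apply max_le
      · have h1 : ‖lam k‖ ≤ max Clam 0 := by
          apply pi_norm_le_iff_of_nonneg (le_max_right _ _) |>.mpr
          intro a
          rw [Real.norm_eq_abs]
          exact le_trans (hlambd k a) (le_max_left _ _)
        exact le_trans h1 (le_trans (le_max_left _ _) (le_max_right _ _))
      · rw [hv1 k]
        exact le_trans (le_max_right _ _) (le_max_right _ _)
  obtain ⟨l, -, φ, hφ, hWconv⟩ := tendsto_subseq_of_bounded
    (Metric.isBounded_closedBall (x := (0 : Mat n × ((Fin n → ℝ) × Em m))) (r := R0)) hWb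
  have hφtop : Tendsto φ atTop atTop := hφ.tendsto_atTop
  have hPt : Tendsto (fun k => P (φ k)) atTop (𝓝 l.1) :=
    ((continuous_fst.tendsto l).comp hWconv)
  have hlamt : Tendsto (fun k => lam (φ k)) atTop (𝓝 l.2.1) :=
    (((continuous_fst.comp continuous_snd).tendsto l).comp hWconv)
  have hvt : Tendsto (fun k => v (φ k)) atTop (𝓝 l.2.2) :=
    (((continuous_snd.comp continuous_snd).tendsto l).comp hWconv)
  have hzt : Tendsto (fun k => z (φ k)) atTop (𝓝 zbar) := by
    have h0 : Tendsto (fun k => dist (z k) zbar) atTop (𝓝 0) := by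
      apply squeeze_zero (fun k => dist_nonneg) (fun k => (hzd k).le)
      exact tendsto_one_div_add_atTop_nhds_zero_nat
    exact (tendsto_iff_dist_tendsto_zero.mpr h0).comp hφtop
  have hPe : ∀ i j, Tendsto (fun k => P (φ k) i j) atTop (𝓝 (l.1 i j)) :=
    fun i j => ((cont_entry i j).tendsto _).comp hPt
  have hle : ∀ a, Tendsto (fun k => lam (φ k) a) atTop (𝓝 (l.2.1 a)) :=
    fun a => ((continuous_apply a).tendsto _).comp hlamt
  -- limit eigendecomposition
  have hortho1 : l.1 * l.1ᵀ = 1 := by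
    ext i j
    have hT : Tendsto (fun k => (P (φ k) * (P (φ k))ᵀ) i j) atTop (𝓝 ((l.1 * l.1ᵀ) i j)) := by
      have hform : ∀ Q : Mat n, (Q * Qᵀ) i j = ∑ a, Q i a * Q j a := fun Q => by
        simp [Matrix.mul_apply, Matrix.transpose_apply]
      simp only [hform]
      exact tendsto_finset_sum _ fun a _ => (hPe i a).mul (hPe j a)
    have hC : Tendsto (fun k => (P (φ k) * (P (φ k))ᵀ) i j) atTop (𝓝 ((1 : Mat n) i j)) := by
      apply tendsto_const_nhds.congr
      intro k
      rw [(hdec (φ k)).1.1]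
    exact tendsto_nhds_unique hT hC
  have hortho2 : l.1ᵀ * l.1 = 1 := by
    ext i j
    have hT : Tendsto (fun k => ((P (φ k))ᵀ * P (φ k)) i j) atTop (𝓝 ((l.1ᵀ * l.1) i j)) := by
      have hform : ∀ Q : Mat n, (Qᵀ * Q) i j = ∑ a, Q a i * Q a j := fun Q => by
        simp [Matrix.mul_apply, Matrix.transpose_apply]
      simp only [hform]
      exact tendsto_finset_sum _ fun a _ => (hPe a i).mul (hPe a j)
    have hC : Tendsto (fun k => ((P (φ k))ᵀ * P (φ k)) i j) atTop (𝓝 ((1 : Mat n) i j)) := by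
      apply tendsto_const_nhds.congr
      intro k
      rw [(hdec (φ k)).1.2]
    exact tendsto_nhds_unique hT hC
  have hanti : Antitone l.2.1 := by
    intro a b hab
    exact le_of_tendsto_of_tendsto' (hle b) (hle a) (fun k => (hdec (φ k)).2.1 hab)
  have hGt : Tendsto (fun k => Gmap g (z (φ k))) atTop (𝓝 (Gmap g zbar)) :=
    (contG.tendsto _).comp hzt
  have hGeq : Gmap g zbar = l.1 * Matrix.diagonal l.2.1 * l.1ᵀ := by
    ext i j
    have hT1 : Tendsto (fun k => (Gmap g (z (φ k))) i j) atTop (𝓝 ((Gmap g zbar) i j)) :=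
      ((cont_entry i j).tendsto _).comp hGt
    have hT2 : Tendsto (fun k => (Gmap g (z (φ k))) i j) atTop
        (𝓝 ((l.1 * Matrix.diagonal l.2.1 * l.1ᵀ) i j)) := by
      rw [conjdiag_entry]
      have heq : ∀ k, (Gmap g (z (φ k))) i j = ∑ a, P (φ k) i a * lam (φ k) a * P (φ k) j a := by
        intro k
        rw [(hdec (φ k)).2.2, conjdiag_entry]
      simp only [heq]
      exact tendsto_finset_sum _ fun a _ => ((hPe i a).mul (hle a)).mul (hPe j a)
    exact tendsto_nhds_unique hT1 hT2
  have hdecb : IsEigDecomp (Gmap g zbar) l.1 l.2.1 := ⟨⟨hortho1, hortho2⟩, hanti, hGeq⟩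
  -- positivity index characterizations
  obtain ⟨P0, lam0, hdec0, hcount0⟩ := hp
  have hlamb_eq : l.2.1 = lam0 := eig_unique hdecb hdec0
  have hposb : ∀ i : Fin n, 0 < l.2.1 i ↔ (i : ℕ) < p := by
    intro i
    refine antitone_pos_iff hanti ?_ i
    rw [hlamb_eq]
    exact hcount0
  have hposk : ∀ k (i : Fin n), 0 < lam (φ k) i ↔ (i : ℕ) < p := by
    intro k i
    obtain ⟨Q, mu, hdq, hcq⟩ := hzpos (φ k)
    have he : lam (φ k) = mu := eig_unique (hdec (φ k)) hdq
    refine antitone_pos_iff (hdec (φ k)).2.1 ?_ i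
    rw [he]
    exact hcq
  -- entry convergence for the transformed derivative matrices
  have hgd : Differentiable ℝ g := hg.differentiable (by norm_num)
  have hdgc : Continuous (fun q : Em m × Em m => fderiv ℝ g q.1 q.2) :=
    ((hg.continuous_fderiv (by norm_num)).comp continuous_fst).clm_apply continuous_snd
  have hMt : Tendsto (fun k => fderiv ℝ g (z (φ k)).1 (v (φ k))) atTop
      (𝓝 (fderiv ℝ g zbar.1 l.2.2)) :=
    (hdgc.tendsto _).comp ((((continuous_fst.tendsto zbar).comp hzt)).prodMk_nhds hvt)
  have hMe : ∀ i j, Tendsto (fun k => (fderiv ℝ g (z (φ k)).1 (v (φ k))) i j) atTop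
      (𝓝 ((fderiv ℝ g zbar.1 l.2.2) i j)) :=
    fun i j => ((cont_entry i j).tendsto _).comp hMt
  have hEe : ∀ i j, Tendsto
      (fun k => ((P (φ k))ᵀ * fderiv ℝ g (z (φ k)).1 (v (φ k)) * P (φ k)) i j) atTop
      (𝓝 ((l.1ᵀ * fderiv ℝ g zbar.1 l.2.2 * l.1) i j)) := by
    intro i j
    simp only [conj_entry_formula]
    refine tendsto_finset_sum _ fun b _ => Tendsto.mul ?_ (hPe b j)
    exact tendsto_finset_sum _ fun a _ => (hPe a i).mul (hMe a b)
  -- entries vanish on nonpositive pairs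
  have hzero : ∀ k (i j : Fin n), ¬ (i : ℕ) < p → ¬ (j : ℕ) < p →
      ((P (φ k))ᵀ * fderiv ℝ g (z (φ k)).1 (v (φ k)) * P (φ k)) i j = 0 := by
    intro k i j hi hj
    have hi' : lam (φ k) i ≤ 0 := not_lt.mp (fun h => hi ((hposk k i).mp h))
    have hj' : lam (φ k) j ≤ 0 := not_lt.mp (fun h => hj ((hposk k j).mp h))
    obtain ⟨h1, h2, h3⟩ := hmem (φ k)
    have hsymE : (fderiv ℝ g (z (φ k)).1 (v (φ k)))ᵀ = fderiv ℝ g (z (φ k)).1 (v (φ k)) :=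
      fderiv_g_isSymm hgd hgs _ _
    rcases hi'.lt_or_eq with hi0 | hi0 <;> rcases hj'.lt_or_eq with hj0 | hj0
    · exact h3 i j hi0 hj0
    · rw [conj_entry_symm _ _ hsymE]
      exact h2 j i hj0 hi0
    · exact h2 i j hi0 hj0
    · exact h1 i j hi0 hj0
  have hEbzero : ∀ (i j : Fin n), ¬ (i : ℕ) < p → ¬ (j : ℕ) < p →
      (l.1ᵀ * fderiv ℝ g zbar.1 l.2.2 * l.1) i j = 0 := by
    intro i j hi hj
    refine tendsto_nhds_unique (hEe i j) ?_
    apply tendsto_const_nhds.congr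
    intro k
    exact (hzero k i j hi hj).symm
  have hmemb : memAppl g zbar l.1 l.2.1 l.2.2 := by
    refine ⟨fun i j hi hj => ?_, fun i j hi hj => ?_, fun i j hi hj => ?_⟩
    · exact hEbzero i j (fun h => by have := (hposb i).mpr h; rw [hi] at this; exact lt_irrefl 0 this) (fun h => by have := (hposb j).mpr h; rw [hj] at this; exact lt_irrefl 0 this)
    · exact hEbzero i j (fun h => by have := (hposb i).mpr h; rw [hi] at this; exact lt_irrefl 0 this) (fun h => absurd ((hposb j).mpr h) (not_lt.mpr hj.le))
    · exact hEbzero i j (fun h => absurd ((hposb i).mpr h) (not_lt.mpr hi.le)) (fun h => absurd ((hposb j).mpr h) (not_lt.mpr hj.le))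
  have hvb1 : ‖l.2.2‖ = 1 := by
    refine tendsto_nhds_unique ((continuous_norm.tendsto _).comp hvt) ?_
    apply tendsto_const_nhds.congr
    intro k
    exact (hv1 (φ k)).symm
  have hvb0 : l.2.2 ≠ 0 := by
    intro h
    rw [h, norm_zero] at hvb1
    exact zero_ne_one hvb1
  -- Q form convergence
  have hQt : Tendsto (fun k => Qform f g (z (φ k)) (P (φ k)) (lam (φ k)) (v (φ k))) atTop
      (𝓝 (Qform f g zbar l.1 l.2.1 l.2.2)) := by
    have hHt : Tendsto (fun k => hessL f g (z (φ k)).1 (z (φ k)).2 (v (φ k))) atTop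
        (𝓝 (hessL f g zbar.1 zbar.2 l.2.2)) :=
      (((hessL_cont f g hf hg).tendsto ((zbar, l.2.2))).comp (hzt.prodMk_nhds hvt)).congr (fun _ => rfl)
    unfold Qform
    apply Tendsto.add
    · exact hvt.inner hHt
    · apply Tendsto.const_mul
      apply tendsto_finset_sum
      intro i _
      apply tendsto_finset_sum
      intro j _
      by_cases hip : (i : ℕ) < p
      · have hpbi : 0 < l.2.1 i := (hposb i).mpr hip
        rcases lt_trichotomy (l.2.1 j) 0 with hj | hj | hj
        · rw [if_pos ⟨hpbi, hj⟩]
          have hlim : Tendsto (fun k => (-(lam (φ k) j) / lam (φ k) i) *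
              (((P (φ k))ᵀ * fderiv ℝ g (z (φ k)).1 (v (φ k)) * P (φ k)) i j) ^ 2) atTop
              (𝓝 ((-(l.2.1 j) / l.2.1 i) *
                ((l.1ᵀ * fderiv ℝ g zbar.1 l.2.2 * l.1) i j) ^ 2)) :=
            (((hle j).neg.div (hle i) (ne_of_gt hpbi)).mul ((hEe i j).pow 2))
          refine Tendsto.congr' ?_ hlim
          have hev : ∀ᶠ k in atTop, lam (φ k) j < 0 :=
            (hle j).eventually_lt_const hj |>.mono (fun k h => h)
          filter_upwards [hev] with k hk
          rw [if_pos ⟨(hposk k i).mpr hip, hk⟩]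
        · rw [if_neg (fun hcc => absurd hcc.2 (by rw [hj]; exact lt_irrefl 0))]
          have hlim : Tendsto (fun k => (-(lam (φ k) j) / lam (φ k) i) *
              (((P (φ k))ᵀ * fderiv ℝ g (z (φ k)).1 (v (φ k)) * P (φ k)) i j) ^ 2) atTop
              (𝓝 ((-(l.2.1 j) / l.2.1 i) *
                ((l.1ᵀ * fderiv ℝ g zbar.1 l.2.2 * l.1) i j) ^ 2)) :=
            (((hle j).neg.div (hle i) (ne_of_gt hpbi)).mul ((hEe i j).pow 2))
          rw [hj] at hlim
          simp only [neg_zero, zero_div, zero_mul] at hlim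
          refine squeeze_zero_norm (fun k => ?_) (by simpa using hlim.abs)
          rw [Real.norm_eq_abs]
          split_ifs with h
          · exact le_of_eq (by rw [abs_mul, abs_sq])
          · simpa using mul_nonneg (abs_nonneg (-lam (φ k) j / lam (φ k) i))
              (sq_nonneg (((P (φ k))ᵀ * fderiv ℝ g (z (φ k)).1 (v (φ k)) * P (φ k)) i j))
        · rw [if_neg (fun hcc => absurd hj (not_lt.mpr hcc.2.le))]
          apply tendsto_const_nhds.congr
          intro k
          have hjk : 0 < lam (φ k) j := (hposk k j).mpr ((hposb j).mp hj)
          rw [if_neg (fun hcc => absurd hcc.2 (not_lt.mpr hjk.le))]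
      · rw [if_neg (fun hcc => hip ((hposb i).mp hcc.1))]
        apply tendsto_const_nhds.congr
        intro k
        rw [if_neg (fun hcc => hip ((hposk k i).mp hcc.1))]
  have hQ0 : Qform f g zbar l.1 l.2.1 l.2.2 = 0 := by
    refine tendsto_nhds_unique hQt ?_
    apply tendsto_const_nhds.congr
    intro k
    exact (hq (φ k)).symm
  exact hW l.1 l.2.1 hdecb l.2.2 hvb0 hmemb hQ0

end mainproof
end

section
/- Let z̄ = (x̄,ȳ) be a KKT pair (F(z̄) = 0), let p, q be the positive and negative inertia indices of G(z̄) (so z̄ ∈ M̃_{p,q}), and assume the W-SOC and the SRCQ hold at z̄. Then Δ = 0 is the only element Δ of the normal space N_{G(z̄)}M_{p,q} satisfying F(x̄, ȳ + Δ) = 0. -/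
open scoped Classical RealInnerProductSpace
open Matrix Set

/- ===== Auxiliary lemmas ===== -/
section AuxLemmas
variable {n : ℕ}

lemma aux_conj_conj {Q : Mat n} (hQ2 : Qᵀ * Q = 1) (M : Mat n) :
    Qᵀ * (Q * M * Qᵀ) * Q = M := by
  have h : Qᵀ * (Q * M * Qᵀ) * Q = (Qᵀ * Q) * M * (Qᵀ * Q) := by noncomm_ring
  rw [h, hQ2, one_mul, mul_one]

lemma aux_trace_sq (M : Mat n) : (Mᵀ * M).trace = ∑ i, ∑ j, (M j i)^2 := by
  simp [Matrix.trace, Matrix.diag, Matrix.mul_apply, sq]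

lemma aux_eq_zero_of_trace {M : Mat n} (h : (Mᵀ * M).trace ≤ 0) : M = 0 := by
  rw [aux_trace_sq] at h
  have h0 : (∑ i : Fin n, ∑ j, (M j i)^2) = 0 :=
    le_antisymm h (Finset.sum_nonneg fun i _ => Finset.sum_nonneg fun j _ => sq_nonneg _)
  ext i j
  have h1 := (Finset.sum_eq_zero_iff_of_nonneg
    (fun i _ => Finset.sum_nonneg fun j _ => sq_nonneg (M j i))).mp h0 j (Finset.mem_univ _)
  have h2 := (Finset.sum_eq_zero_iff_of_nonneg
    (fun k _ => sq_nonneg (M k j))).mp h1 i (Finset.mem_univ _)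
  simpa using pow_eq_zero_iff (n := 2) (by norm_num) |>.mp h2

lemma aux_quad_of_psd {M : Mat n} (hM : M.PosSemidef) (u : Fin n → ℝ) :
    0 ≤ ∑ i, ∑ j, u i * M i j * u j := by
  have h := hM.dotProduct_mulVec_nonneg u
  simpa [dotProduct, Matrix.mulVec, Finset.mul_sum, mul_assoc] using h

lemma aux_psd_of_quad {M : Mat n} (hsym : M.IsSymm)
    (h : ∀ u : Fin n → ℝ, 0 ≤ ∑ i, ∑ j, u i * M i j * u j) : M.PosSemidef := by
  refine Matrix.PosSemidef.of_dotProduct_mulVec_nonneg ?_ fun u => ?_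
  · rw [Matrix.IsHermitian, Matrix.conjTranspose_eq_transpose_of_trivial]; exact hsym
  · have := h u
    simpa [dotProduct, Matrix.mulVec, Finset.mul_sum, mul_assoc] using this

lemma aux_diag_nonneg_of_psd {M : Mat n} (hM : M.PosSemidef) (i : Fin n) : 0 ≤ M i i := by
  have := aux_quad_of_psd hM (Pi.single i 1)
  simpa [Pi.single_apply, Finset.sum_ite_eq'] using this

lemma aux_trace_mul_diag (M : Mat n) (d : Fin n → ℝ) :
    (M * Matrix.diagonal d).trace = ∑ i, M i i * d i := by
  simp [Matrix.trace, Matrix.diag, Matrix.mul_diagonal]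

lemma aux_trace_mul_double (X Y : Mat n) : (X * Y).trace = ∑ i, ∑ j, X i j * Y j i := by
  simp [Matrix.trace, Matrix.diag, Matrix.mul_apply]

lemma aux_hermitian_transpose_eq {M : Mat n} (hM : M.IsHermitian) : Mᵀ = M := by
  rwa [← Matrix.conjTranspose_eq_transpose_of_trivial]

lemma aux_perm_orth (σ : Equiv.Perm (Fin n)) : IsOrthoMat (σ.toPEquiv.toMatrix : Mat n) := by
  constructor <;>
  · rw [← PEquiv.toMatrix_symm, ← PEquiv.toMatrix_trans]
    simp [← Equiv.toPEquiv_symm, ← Equiv.toPEquiv_trans]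

lemma aux_exists_eigDecomp {A : Mat n} (hA : A.IsSymm) : ∃ P lam, IsEigDecomp A P lam := by
  have hH : A.IsHermitian := by
    rw [Matrix.IsHermitian, Matrix.conjTranspose_eq_transpose_of_trivial]; exact hA
  set U : Mat n := (hH.eigenvectorUnitary : Mat n) with hUdef
  have hU1 : U * Uᵀ = 1 := by
    have := (Matrix.mem_unitaryGroup_iff).mp (hH.eigenvectorUnitary).2
    rwa [Matrix.star_eq_conjTranspose, Matrix.conjTranspose_eq_transpose_of_trivial] at this
  have hU2 : Uᵀ * U = 1 := by
    have := (Matrix.mem_unitaryGroup_iff').mp (hH.eigenvectorUnitary).2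
    rwa [Matrix.star_eq_conjTranspose, Matrix.conjTranspose_eq_transpose_of_trivial] at this
  set d : Fin n → ℝ := hH.eigenvalues with hddef
  have hspec : A = U * Matrix.diagonal d * Uᵀ := by
    have := hH.spectral_theorem
    rwa [Unitary.conjStarAlgAut_apply, Matrix.star_eq_conjTranspose, Matrix.conjTranspose_eq_transpose_of_trivial,
      RCLike.ofReal_real_eq_id, Function.id_comp] at this
  set σ : Equiv.Perm (Fin n) := Tuple.sort (fun i => -d i) with hσdef
  set Pσ : Mat n := σ.toPEquiv.toMatrix with hPσdef
  obtain ⟨hp1, hp2⟩ := aux_perm_orth σ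
  refine ⟨U * Pσᵀ, d ∘ σ, ⟨?_, ?_⟩, ?_, ?_⟩
  · rw [Matrix.transpose_mul, Matrix.transpose_transpose]
    calc U * Pσᵀ * (Pσ * Uᵀ) = U * (Pσᵀ * Pσ) * Uᵀ := by noncomm_ring
      _ = 1 := by rw [hp2, mul_one, hU1]
  · rw [Matrix.transpose_mul, Matrix.transpose_transpose]
    calc Pσ * Uᵀ * (U * Pσᵀ) = Pσ * (Uᵀ * U) * Pσᵀ := by noncomm_ring
      _ = 1 := by rw [hU2, mul_one, hp1]
  · intro i j hij
    have := Tuple.monotone_sort (fun i => -d i) hij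
    simpa using this
  · have hmid : Pσ * Matrix.diagonal d * Pσᵀ = Matrix.diagonal (d ∘ σ) := by
      rw [hPσdef, ← PEquiv.toMatrix_symm, ← Equiv.toPEquiv_symm,
        PEquiv.toMatrix_toPEquiv_mul, PEquiv.mul_toMatrix_toPEquiv]
      ext i j
      simp only [Matrix.submatrix_apply, Matrix.diagonal_apply, Function.comp, id]
      rcases eq_or_ne i j with h|h
      · simp [h]
      · simp [h, σ.injective.ne h]
    have hd : Matrix.diagonal d = Pσᵀ * Matrix.diagonal (d ∘ σ) * Pσ := by
      rw [← hmid]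
      calc Matrix.diagonal d
          = (Pσᵀ * Pσ) * Matrix.diagonal d * (Pσᵀ * Pσ) := by rw [hp2]; simp
        _ = Pσᵀ * (Pσ * Matrix.diagonal d * Pσᵀ) * Pσ := by noncomm_ring
    rw [Matrix.transpose_mul, Matrix.transpose_transpose]
    calc A = U * Matrix.diagonal d * Uᵀ := hspec
      _ = U * (Pσᵀ * Matrix.diagonal (d ∘ σ) * Pσ) * Uᵀ := by rw [← hd]
      _ = U * Pσᵀ * Matrix.diagonal (d ∘ σ) * (Pσ * Uᵀ) := by noncomm_ring

lemma aux_trace_mul_psd_nonneg' {X Y : Mat n} (hX : X.PosSemidef)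
    (Q : Mat n) (mu : Fin n → ℝ) (hQ2 : Qᵀ * Q = 1) (hmu : ∀ i, 0 ≤ mu i)
    (hYdec : Y = Q * Matrix.diagonal mu * Qᵀ) : 0 ≤ (X * Y).trace := by
  have hXc : (Qᵀ * X * Q).PosSemidef := by
    have := hX.conjTranspose_mul_mul_same Q
    rwa [Matrix.conjTranspose_eq_transpose_of_trivial] at this
  have key : (X * Y).trace = ((Qᵀ * X * Q) * Matrix.diagonal mu).trace := by
    rw [hYdec]
    calc (X * (Q * Matrix.diagonal mu * Qᵀ)).trace
        = ((X * (Q * Matrix.diagonal mu)) * Qᵀ).trace := by noncomm_ring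
      _ = (Qᵀ * (X * (Q * Matrix.diagonal mu))).trace := Matrix.trace_mul_comm _ _
      _ = ((Qᵀ * X * Q) * Matrix.diagonal mu).trace := by noncomm_ring
  rw [key, aux_trace_mul_diag]
  exact Finset.sum_nonneg fun i _ => mul_nonneg (aux_diag_nonneg_of_psd hXc i) (hmu i)

lemma aux_trace_psd_mul_psd {X Y : Mat n} (hX : X.PosSemidef) (hY : Y.PosSemidef) :
    0 ≤ (X * Y).trace := by
  obtain ⟨Q, mu, ⟨⟨hQ1, hQ2⟩, hmono, hYdec⟩⟩ :=
    aux_exists_eigDecomp (show Y.IsSymm from aux_hermitian_transpose_eq hY.1)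
  have hconj : (Qᵀ * Y * Q).PosSemidef := by
    have := hY.conjTranspose_mul_mul_same Q
    rwa [Matrix.conjTranspose_eq_transpose_of_trivial] at this
  have heq : Qᵀ * Y * Q = Matrix.diagonal mu := by rw [hYdec]; exact aux_conj_conj hQ2 _
  have hmu : ∀ i, 0 ≤ mu i := by
    intro i
    have := aux_diag_nonneg_of_psd hconj i
    rwa [heq, Matrix.diagonal_apply_eq] at this
  exact aux_trace_mul_psd_nonneg' hX Q mu hQ2 hmu hYdec

/-- Moreau decomposition property. -/
def MoreauP {n : ℕ} (A X : Mat n) : Prop :=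
  X.PosSemidef ∧ (X - A).PosSemidef ∧ ((X - A) * X).trace = 0

lemma aux_psd_conj {M Q : Mat n} (hM : M.PosSemidef) :
    (Q * M * Qᵀ).PosSemidef := by
  have := hM.mul_mul_conjTranspose_same Q
  rwa [Matrix.conjTranspose_eq_transpose_of_trivial] at this

lemma aux_moreau_unique {A X Y : Mat n} (hX : MoreauP A X) (hY : MoreauP A Y) : X = Y := by
  obtain ⟨hX1, hX2, hX3⟩ := hX
  obtain ⟨hY1, hY2, hY3⟩ := hY
  have htr : ((X - Y)ᵀ * (X - Y)).trace ≤ 0 := by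
    have hsym : (X - Y)ᵀ = X - Y := by
      rw [Matrix.transpose_sub, aux_hermitian_transpose_eq hX1.1,
        aux_hermitian_transpose_eq hY1.1]
    rw [hsym]
    have expand : (X - Y) * (X - Y) = ((X - A) * X) + ((Y - A) * Y)
        - ((X - A) * Y) - ((Y - A) * X) := by noncomm_ring
    have t1 : 0 ≤ ((X - A) * Y).trace := aux_trace_psd_mul_psd hX2 hY1
    have t2 : 0 ≤ ((Y - A) * X).trace := aux_trace_psd_mul_psd hY2 hX1
    rw [expand]
    simp only [Matrix.trace_sub, Matrix.trace_add, hX3, hY3]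
    linarith
  exact sub_eq_zero.mp (aux_eq_zero_of_trace htr)

lemma aux_moreau_of_decomp {A Q : Mat n} {mu : Fin n → ℝ} (h : IsEigDecomp A Q mu) :
    MoreauP A (Q * Matrix.diagonal (fun i => max (mu i) 0) * Qᵀ) := by
  obtain ⟨⟨hQ1, hQ2⟩, hmono, hAdec⟩ := h
  have hsub : Q * Matrix.diagonal (fun i => max (mu i) 0) * Qᵀ - A
      = Q * Matrix.diagonal (fun i => max (mu i) 0 - mu i) * Qᵀ := by
    rw [hAdec, ← Matrix.diagonal_sub]; noncomm_ring
  refine ⟨aux_psd_conj (Matrix.PosSemidef.diagonal fun i => le_max_right _ _), ?_, ?_⟩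
  · rw [hsub]
    exact aux_psd_conj (Matrix.PosSemidef.diagonal fun i => by
      simp [sub_nonneg, le_max_left])
  · rw [hsub]
    have e : (Q * Matrix.diagonal (fun i => max (mu i) 0 - mu i) * Qᵀ) *
        (Q * Matrix.diagonal (fun i => max (mu i) 0) * Qᵀ)
        = Q * (Matrix.diagonal (fun i => max (mu i) 0 - mu i) * (Qᵀ * Q) *
            Matrix.diagonal (fun i => max (mu i) 0)) * Qᵀ := by noncomm_ring
    rw [e, hQ2, mul_one, Matrix.diagonal_mul_diagonal]
    rw [Matrix.trace_mul_comm, ← Matrix.mul_assoc, hQ2, one_mul, Matrix.trace_diagonal]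
    apply Finset.sum_eq_zero
    intro i _
    rcases le_or_gt (mu i) 0 with h|h
    · simp [max_eq_right h]
    · simp [max_eq_left h.le]

lemma aux_piPlus_eq {A Q : Mat n} {mu : Fin n → ℝ} (h : IsEigDecomp A Q mu) :
    piPlus A = Q * Matrix.diagonal (fun i => max (mu i) 0) * Qᵀ := by
  have hex : ∃ P lam, IsEigDecomp A P lam := ⟨Q, mu, h⟩
  rw [piPlus, dif_pos hex]
  exact aux_moreau_unique (aux_moreau_of_decomp hex.choose_spec.choose_spec)
    (aux_moreau_of_decomp h)

lemma aux_euclid_decomp {m : ℕ} (v : Em m) :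
    v = ∑ k, v k • EuclideanSpace.single k 1 := by
  ext j
  rw [WithLp.ofLp_sum, Finset.sum_apply j Finset.univ _]
  simp [EuclideanSpace.single_apply, Finset.sum_ite_eq]

end AuxLemmas
/-- If `z̄ = (x̄,ȳ)` is a KKT pair in `M̃_{p,q}` at which the W-SOC and
the SRCQ hold, then `Δ = 0` is the only element of the normal space `N_{G(z̄)}M_{p,q}`
with `F(x̄, ȳ + Δ) = 0`. -/
theorem normal_space_unique_zero {m n p q : ℕ}
    (f : Em m → ℝ) (g : Em m → Mat n)
    (hf : ContDiff ℝ 2 f) (hg : ContDiff ℝ 2 g) (hgs : ∀ x, (g x).IsSymm)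
    (zbar : Em m × Mat n)
    (hkkt : KKTF f g zbar = 0)
    (hz : zbar ∈ lstratum g p q)
    (hW : WSOC f g zbar) (hS : SRCQ g zbar)
    (P : Mat n) (lam : Fin n → ℝ) (hdec : IsEigDecomp (Gmap g zbar) P lam) :
    ∀ Δ : Mat n, memNormal P lam Δ →
      KKTF f g (zbar.1, zbar.2 + Δ) = 0 → Δ = 0 := by
  intro Δ hΔmem hkkt'
  obtain ⟨hΔsym, hΔnorm⟩ := hΔmem
  obtain ⟨⟨hP1, hP2⟩, hanti, hGdec⟩ := hdec
  have hGd : g zbar.1 + zbar.2 = P * Matrix.diagonal lam * Pᵀ := hGdec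
  -- KKT components
  have hk1 : gradient f zbar.1 + gradg g zbar.1 zbar.2 = 0 := congrArg Prod.fst hkkt
  have hk2 : -g zbar.1 + piPlus (Gmap g zbar) = 0 := congrArg Prod.snd hkkt
  have hk1' : gradient f zbar.1 + gradg g zbar.1 (zbar.2 + Δ) = 0 := congrArg Prod.fst hkkt'
  have hk2' : -g zbar.1 + piPlus (g zbar.1 + (zbar.2 + Δ)) = 0 := congrArg Prod.snd hkkt'
  -- additivity of gradg and vanishing of the adjoint on Δ
  have hadd : gradg g zbar.1 (zbar.2 + Δ) = gradg g zbar.1 zbar.2 + gradg g zbar.1 Δ := by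
    unfold gradg
    rw [← map_add]
    congr 1
    funext k
    simp [Matrix.transpose_add, Matrix.add_mul]
  have hgradΔ : gradg g zbar.1 Δ = 0 := by
    rw [hadd, ← add_assoc, hk1, zero_add] at hk1'
    exact hk1'
  have htr0 : ∀ k, (Δᵀ * fderiv ℝ g zbar.1 (EuclideanSpace.single k 1)).trace = 0 := by
    intro k
    have h := congrArg (EuclideanSpace.equiv (Fin m) ℝ) hgradΔ
    rw [gradg] at h
    simp only [ContinuousLinearEquiv.apply_symm_apply, map_zero] at h
    exact congrFun h k
  have htrv : ∀ v : Em m, (Δᵀ * fderiv ℝ g zbar.1 v).trace = 0 := by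
    intro v
    conv_lhs => rw [aux_euclid_decomp v]
    rw [map_sum, Matrix.mul_sum, Matrix.trace_sum]
    simp [htr0]
  -- projection identities
  have hpig : piPlus (Gmap g zbar) = g zbar.1 := by
    have h := congrArg (fun M => g zbar.1 + M) hk2
    simpa using h
  have hpig' : piPlus (g zbar.1 + (zbar.2 + Δ)) = g zbar.1 := by
    have h := congrArg (fun M => g zbar.1 + M) hk2'
    simpa using h
  have hgx : g zbar.1 = P * Matrix.diagonal (fun i => max (lam i) 0) * Pᵀ := by
    rw [← hpig]
    exact aux_piPlus_eq ⟨⟨hP1, hP2⟩, hanti, hGdec⟩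
  -- Moreau property of the shifted projection
  have hGΔsym : (g zbar.1 + (zbar.2 + Δ)).IsSymm := by
    rw [Matrix.IsSymm, Matrix.transpose_add, Matrix.transpose_add,
      (hgs zbar.1).eq, hz.1.eq, hΔsym.eq]
  obtain ⟨Q, mu, hQdec⟩ := aux_exists_eigDecomp hGΔsym
  have hmor : MoreauP (g zbar.1 + (zbar.2 + Δ)) (g zbar.1) := by
    have h := aux_moreau_of_decomp hQdec
    rwa [← aux_piPlus_eq hQdec, hpig'] at h
  -- the conjugated normal-block matrix D and its negative semidefiniteness on β
  set D : Mat n := Pᵀ * Δ * P with hDdef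
  set c : Fin n → ℝ := fun i => max (lam i) 0 - lam i with hcdef
  have hPSD : (Matrix.diagonal c - D).PosSemidef := by
    have h1 : (g zbar.1 - (g zbar.1 + (zbar.2 + Δ))).PosSemidef := hmor.2.1
    have h2 : (Pᵀ * (g zbar.1 - (g zbar.1 + (zbar.2 + Δ))) * P).PosSemidef := by
      have := h1.conjTranspose_mul_mul_same P
      rwa [Matrix.conjTranspose_eq_transpose_of_trivial] at this
    have e1 : g zbar.1 - (g zbar.1 + (zbar.2 + Δ))
        = P * Matrix.diagonal (fun i => max (lam i) 0) * Pᵀ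
          - P * Matrix.diagonal lam * Pᵀ - Δ := by
      calc g zbar.1 - (g zbar.1 + (zbar.2 + Δ))
          = g zbar.1 - (g zbar.1 + zbar.2) - Δ := by abel
        _ = _ := by rw [hGd, ← hgx]
    have hdiagc : Matrix.diagonal c
        = Matrix.diagonal (fun i => max (lam i) 0) - Matrix.diagonal lam := by
      ext i j
      rcases eq_or_ne i j with h|h
      · simp [h, hcdef]
      · simp [Matrix.diagonal_apply_ne _ h, h]
    have e2 : Pᵀ * (g zbar.1 - (g zbar.1 + (zbar.2 + Δ))) * P = Matrix.diagonal c - D := by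
      rw [e1]
      have expand : Pᵀ * (P * Matrix.diagonal (fun i => max (lam i) 0) * Pᵀ
            - P * Matrix.diagonal lam * Pᵀ - Δ) * P
          = Pᵀ * (P * Matrix.diagonal (fun i => max (lam i) 0) * Pᵀ) * P
            - Pᵀ * (P * Matrix.diagonal lam * Pᵀ) * P - Pᵀ * Δ * P := by noncomm_ring
      rw [expand, aux_conj_conj hP2, aux_conj_conj hP2, hdiagc, hDdef]
    rwa [e2] at h2
  have hDquad : ∀ u : Fin n → ℝ, (∀ i, lam i ≠ 0 → u i = 0) →
      ∑ i, ∑ j, u i * D i j * u j ≤ 0 := by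
    intro u hu
    have h := aux_quad_of_psd hPSD u
    have hsplit : ∑ i, ∑ j, u i * (Matrix.diagonal c - D) i j * u j
        = (∑ i, u i * c i * u i) - ∑ i, ∑ j, u i * D i j * u j := by
      rw [← Finset.sum_sub_distrib]
      apply Finset.sum_congr rfl
      intro i _
      have hdiagsum : ∑ j, u i * Matrix.diagonal c i j * u j = u i * c i * u i := by
        simp [Matrix.diagonal_apply, ite_mul, mul_ite, Finset.sum_ite_eq]
      rw [← hdiagsum, ← Finset.sum_sub_distrib]
      apply Finset.sum_congr rfl
      intro j _
      simp [Matrix.sub_apply, mul_sub, sub_mul]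
    have hzero : ∑ i, u i * c i * u i = 0 := by
      apply Finset.sum_eq_zero
      intro i _
      by_cases hui : u i = 0
      · simp [hui]
      · have hl : lam i = 0 := by
          by_contra hl
          exact hui (hu i hl)
        simp [hcdef, hl]
    rw [hsplit, hzero] at h
    linarith
  -- D vanishes off the ββ block and is symmetric
  have hD0 : ∀ i j, lam i ≠ 0 ∨ lam j ≠ 0 → D i j = 0 := hΔnorm
  have hDsym : Dᵀ = D := by
    rw [hDdef, Matrix.transpose_mul, Matrix.transpose_mul, Matrix.transpose_transpose,
      hΔsym.eq, Matrix.mul_assoc]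
  -- SRCQ decomposition of Δ
  obtain ⟨v, B, hBsym, hBpsd, hBbg, hBgg, hΔeq⟩ :=
    hS P lam ⟨⟨hP1, hP2⟩, hanti, hGdec⟩ Δ hΔsym
  -- the truncated matrix B̃
  set Bt : Mat n := Matrix.of (fun i j => if lam i = 0 ∧ lam j = 0 then B i j else 0)
    with hBtdef
  have hBt_apply : ∀ i j, Bt i j = if lam i = 0 ∧ lam j = 0 then B i j else 0 :=
    fun i j => rfl
  have hBt_psd : Bt.PosSemidef := by
    apply aux_psd_of_quad
    · rw [Matrix.IsSymm]
      ext i j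
      rw [Matrix.transpose_apply, hBt_apply, hBt_apply]
      have hBij : B j i = B i j := congrFun (congrFun hBsym.eq i) j
      rcases Classical.em (lam i = 0 ∧ lam j = 0) with h|h
      · simp [h, h.1, h.2, hBij]
      · have h' : ¬(lam j = 0 ∧ lam i = 0) := fun hc => h ⟨hc.2, hc.1⟩
        simp [h, h']
    · intro u
      have hBu := hBpsd (fun i => if lam i = 0 then u i else 0)
        (fun i hi => by simp [hi])
      calc (0:ℝ) ≤ ∑ i, ∑ j, (if lam i = 0 then u i else 0) * B i j *
            (if lam j = 0 then u j else 0) := hBu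
        _ = ∑ i, ∑ j, u i * Bt i j * u j := by
            apply Finset.sum_congr rfl; intro i _
            apply Finset.sum_congr rfl; intro j _
            rw [hBt_apply]
            by_cases hi : lam i = 0 <;> by_cases hj : lam j = 0 <;> simp [hi, hj]
  have hnD_psd : (-D).PosSemidef := by
    apply aux_psd_of_quad
    · rw [Matrix.IsSymm, Matrix.transpose_neg, hDsym]
    · intro u
      have key : ∑ i, ∑ j, u i * D i j * u j
          = ∑ i, ∑ j, (if lam i = 0 then u i else 0) * D i j *
              (if lam j = 0 then u j else 0) := by
        apply Finset.sum_congr rfl; intro i _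
        apply Finset.sum_congr rfl; intro j _
        rcases Classical.em (lam i = 0) with hi|hi
        · rcases Classical.em (lam j = 0) with hj|hj
          · simp [hi, hj]
          · simp [hi, hj, hD0 i j (Or.inr hj)]
        · simp [hi, hD0 i j (Or.inl hi)]
      have hle := hDquad (fun i => if lam i = 0 then u i else 0)
        (fun i hi => by simp [hi])
      rw [← key] at hle
      have : ∑ i, ∑ j, u i * (-D) i j * u j = -∑ i, ∑ j, u i * D i j * u j := by
        simp [Matrix.neg_apply, mul_neg, neg_mul, Finset.sum_neg_distrib]
      rw [this]
      linarith
  -- final computation: trace(ΔᵀΔ) ≤ 0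
  have hfinal : (Δᵀ * Δ).trace ≤ 0 := by
    have hsplit : (Δᵀ * Δ).trace
        = (Δᵀ * fderiv ℝ g zbar.1 v).trace + (Δᵀ * (P * B * Pᵀ)).trace := by
      conv_lhs => rw [show Δᵀ * Δ = Δᵀ * (fderiv ℝ g zbar.1 v + P * B * Pᵀ) from by
        rw [← hΔeq]]
      rw [Matrix.mul_add, Matrix.trace_add]
    have hcyc : (Δᵀ * (P * B * Pᵀ)).trace = (D * B).trace := by
      calc (Δᵀ * (P * B * Pᵀ)).trace = ((Δ * P * B) * Pᵀ).trace := by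
            rw [hΔsym.eq]; noncomm_ring
        _ = (Pᵀ * (Δ * P * B)).trace := Matrix.trace_mul_comm _ _
        _ = (D * B).trace := by rw [hDdef]; noncomm_ring
    have hDB : (D * B).trace = (D * Bt).trace := by
      rw [aux_trace_mul_double, aux_trace_mul_double]
      apply Finset.sum_congr rfl; intro i _
      apply Finset.sum_congr rfl; intro j _
      rw [hBt_apply]
      rcases Classical.em (lam j = 0 ∧ lam i = 0) with h|h
      · simp [h]
      · have hD' : D i j = 0 := by
          apply hD0
          rcases Classical.em (lam j = 0) with hj|hj
          · exact Or.inl fun hi => h ⟨hj, hi⟩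
          · exact Or.inr hj
        simp [hD', h]
    have hge : 0 ≤ ((-D) * Bt).trace := aux_trace_psd_mul_psd hnD_psd hBt_psd
    rw [Matrix.neg_mul, Matrix.trace_neg] at hge
    rw [hsplit, htrv v, hcyc, hDB]
    linarith
  exact aux_eq_zero_of_trace hfinal
end
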